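/- Let a₁, a₂ ∈ ℝ and C₀ > 0 with 0 < a₁ ≤ C₀ and C₀^{−1} ≤ |a₂| ≤ C₀, and let s ∈ ℝ. Then for all x ∈ ℝ^d, ∫_{ℝ^d} e^{−a₁|η + a₂x|²} ⟨η⟩^s dη ≳ ⟨x⟩^s, where the implicit constant depends only on d, C₀ and s. -/

import Mathlib

open MeasureTheory

section aux

variable {d : ℕ}

local notation "E" => EuclideanSpace ℝ (Fin d)

private lemma gauss_transl_integrable {b : ℝ} (hb : 0 < b) (w : E) :
    Integrable (fun v : E => Real.exp (-b * ‖v + w‖ ^ 2)) := by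
  have hg : Integrable (fun v : E => Real.exp (-b * ‖v‖ ^ 2)) := by
    have h := (GaussianFourier.integrable_cexp_neg_mul_sq_norm_add
      (b := (b : ℂ)) (by simpa using hb) 0 (0 : E)).norm
    refine h.congr (Filter.Eventually.of_forall fun v => ?_)
    have hv : (-(b:ℂ) * (‖v‖:ℂ) ^ 2 + 0 * ((inner ℝ (0:E) v : ℝ) : ℂ)) = ((-b * ‖v‖ ^ 2 : ℝ) : ℂ) := by
      push_cast; ring
    simp only [hv, Complex.norm_exp, Complex.ofReal_re]
  have key := (measurePreserving_add_right (volume : Measure E) w).integrable_comp_emb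
    (Homeomorph.addRight w).measurableEmbedding
    (g := fun v : E => Real.exp (-b * ‖v‖ ^ 2))
  exact key.2 hg

private lemma weight_integrable {a₁ : ℝ} (ha₁ : 0 < a₁) (s : ℝ) (w : E) :
    Integrable (fun η : E =>
      Real.exp (-a₁ * ‖η + w‖ ^ 2) * (1 + ‖η‖ ^ 2) ^ (s / 2)) := by
  set n : ℕ := ⌈s / 2⌉₊ with hn
  set Cb : ℝ := (1 + 2 * ‖w‖ ^ 2) ^ n * ((4 / a₁) ^ n * n.factorial * Real.exp (a₁ / 4))
    with hCb
  have hcont : Continuous (fun η : E =>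
      Real.exp (-a₁ * ‖η + w‖ ^ 2) * (1 + ‖η‖ ^ 2) ^ (s / 2)) := by
    apply Continuous.mul
    · fun_prop
    · exact Continuous.rpow_const (by fun_prop) (fun η => Or.inl (by positivity))
  have hgt := (gauss_transl_integrable (half_pos ha₁) w).const_mul Cb
  refine hgt.mono' hcont.aestronglyMeasurable (Filter.Eventually.of_forall fun η => ?_)
  rw [Real.norm_eq_abs, abs_of_nonneg (by positivity)]
  set t : ℝ := ‖η + w‖ with ht
  have htn : 0 ≤ t := norm_nonneg _
  -- step 1 : rpow ≤ pow
  have h1 : (1 + ‖η‖ ^ 2) ^ (s / 2) ≤ (1 + ‖η‖ ^ 2) ^ n := by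
    rw [← Real.rpow_natCast (1 + ‖η‖ ^ 2) n]
    exact Real.rpow_le_rpow_of_exponent_le (by nlinarith [norm_nonneg η]) (Nat.le_ceil _)
  -- step 2
  have hηt : ‖η‖ ≤ t + ‖w‖ := by
    simpa using norm_sub_le (η + w) w
  have h2 : (1 : ℝ) + ‖η‖ ^ 2 ≤ (1 + 2 * ‖w‖ ^ 2) * (1 + 2 * t ^ 2) := by
    nlinarith [sq_nonneg (t - ‖w‖), norm_nonneg η, norm_nonneg w, sq_nonneg t, sq_nonneg ‖w‖,
      sq_nonneg (t * ‖w‖)]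
  have h2' : (1 + ‖η‖ ^ 2) ^ n ≤ ((1 + 2 * ‖w‖ ^ 2) * (1 + 2 * t ^ 2)) ^ n :=
    pow_le_pow_left₀ (by positivity) h2 n
  -- step 3
  have h3 : (1 + 2 * t ^ 2) ^ n ≤
      (4 / a₁) ^ n * n.factorial * (Real.exp (a₁ / 4) * Real.exp (a₁ / 2 * t ^ 2)) := by
    have hu : (0 : ℝ) ≤ a₁ / 4 * (1 + 2 * t ^ 2) := by positivity
    have hexp := Real.pow_div_factorial_le_exp _ hu n
    have hun : (a₁ / 4 * (1 + 2 * t ^ 2)) ^ n = (a₁ / 4) ^ n * (1 + 2 * t ^ 2) ^ n :=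
      mul_pow _ _ n
    have hfac : (0 : ℝ) < n.factorial := by positivity
    have he : Real.exp (a₁ / 4 * (1 + 2 * t ^ 2)) =
        Real.exp (a₁ / 4) * Real.exp (a₁ / 2 * t ^ 2) := by
      rw [← Real.exp_add]; ring_nf
    have h4a : (0 : ℝ) < (a₁ / 4) ^ n := by positivity
    have := (div_le_iff₀ hfac).1 hexp
    rw [hun, he] at this
    have h5 : (1 + 2 * t ^ 2) ^ n = (4 / a₁) ^ n * ((a₁ / 4) ^ n * (1 + 2 * t ^ 2) ^ n) := by
      rw [← mul_assoc, ← mul_pow]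
      field_simp
      simp
    rw [h5]
    calc (4 / a₁) ^ n * ((a₁ / 4) ^ n * (1 + 2 * t ^ 2) ^ n)
        ≤ (4 / a₁) ^ n * (Real.exp (a₁ / 4) * Real.exp (a₁ / 2 * t ^ 2) * n.factorial) := by
          apply mul_le_mul_of_nonneg_left this (by positivity)
      _ = (4 / a₁) ^ n * n.factorial * (Real.exp (a₁ / 4) * Real.exp (a₁ / 2 * t ^ 2)) := by
          ring
  -- combine
  have hbound : (1 + ‖η‖ ^ 2) ^ (s / 2) ≤ Cb * Real.exp (a₁ / 2 * t ^ 2) := by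
    calc (1 + ‖η‖ ^ 2) ^ (s / 2) ≤ (1 + ‖η‖ ^ 2) ^ n := h1
      _ ≤ ((1 + 2 * ‖w‖ ^ 2) * (1 + 2 * t ^ 2)) ^ n := h2'
      _ = (1 + 2 * ‖w‖ ^ 2) ^ n * (1 + 2 * t ^ 2) ^ n := mul_pow _ _ n
      _ ≤ (1 + 2 * ‖w‖ ^ 2) ^ n *
          ((4 / a₁) ^ n * n.factorial * (Real.exp (a₁ / 4) * Real.exp (a₁ / 2 * t ^ 2))) :=
          mul_le_mul_of_nonneg_left h3 (by positivity)
      _ = Cb * Real.exp (a₁ / 2 * t ^ 2) := by rw [hCb]; ring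
  calc Real.exp (-a₁ * t ^ 2) * (1 + ‖η‖ ^ 2) ^ (s / 2)
      ≤ Real.exp (-a₁ * t ^ 2) * (Cb * Real.exp (a₁ / 2 * t ^ 2)) :=
        mul_le_mul_of_nonneg_left hbound (Real.exp_pos _).le
    _ = Cb * (Real.exp (-a₁ * t ^ 2) * Real.exp (a₁ / 2 * t ^ 2)) := by ring
    _ = Cb * Real.exp (-(a₁ / 2) * t ^ 2) := by rw [← Real.exp_add]; ring_nf

end aux

set_option maxHeartbeats 1000000 in
/-- If `0 < a₁ ≤ C₀` and `C₀⁻¹ ≤ |a₂| ≤ C₀`, then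
`∫ e^{-a₁|η+a₂x|²} ⟨η⟩^s dη ≳ ⟨x⟩^s`, with implicit constant depending only on
`d`, `C₀`, `s`. -/
theorem gaussian_weight_lower_bound (d : ℕ) (hd : 1 ≤ d) (C₀ s : ℝ) (hC₀ : 0 < C₀) :
    ∃ c : ℝ, 0 < c ∧
      ∀ (a₁ a₂ : ℝ) (x : EuclideanSpace ℝ (Fin d)),
        0 < a₁ → a₁ ≤ C₀ → C₀⁻¹ ≤ |a₂| → |a₂| ≤ C₀ →
        c * (1 + ‖x‖ ^ 2) ^ (s / 2) ≤
          ∫ η : EuclideanSpace ℝ (Fin d),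
            Real.exp (-a₁ * ‖η + a₂ • x‖ ^ 2) * (1 + ‖η‖ ^ 2) ^ (s / 2) := by
  classical
  set K : ℝ := 3 * (1 + C₀ ^ 2) with hK
  have hK0 : 0 < K := by positivity
  set V : ℝ := (volume (Metric.closedBall (0 : EuclideanSpace ℝ (Fin d)) 1)).toReal with hV
  have hVpos : 0 < V := by
    rw [hV]
    exact ENNReal.toReal_pos (Metric.measure_closedBall_pos volume 0 one_pos).ne'
      measure_closedBall_lt_top.ne
  have hKpow : 0 < K ^ (-|s| / 2) := Real.rpow_pos_of_pos hK0 _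
  refine ⟨Real.exp (-C₀) * K ^ (-|s| / 2) * V, by positivity, ?_⟩
  intro a₁ a₂ x ha₁ ha₁C ha₂l ha₂u
  set w : EuclideanSpace ℝ (Fin d) := a₂ • x with hw
  set f : EuclideanSpace ℝ (Fin d) → ℝ :=
    fun η => Real.exp (-a₁ * ‖η + w‖ ^ 2) * (1 + ‖η‖ ^ 2) ^ (s / 2) with hf
  have hfint : Integrable f := weight_integrable ha₁ s w
  set S : Set (EuclideanSpace ℝ (Fin d)) := Metric.closedBall (-w) 1 with hS
  have hμS : volume S = volume (Metric.closedBall (0 : EuclideanSpace ℝ (Fin d)) 1) :=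
    Measure.addHaar_closedBall_center volume (-w) 1
  have hwx : ‖w‖ = |a₂| * ‖x‖ := by rw [hw, norm_smul, Real.norm_eq_abs]
  have hxpos : (0:ℝ) < 1 + ‖x‖ ^ 2 := by positivity
  -- pointwise lower bound on S
  have hpt : ∀ η ∈ S, Real.exp (-C₀) * (K ^ (-|s| / 2) * (1 + ‖x‖ ^ 2) ^ (s / 2)) ≤ f η := by
    intro η hη
    have h1 : ‖η + w‖ ≤ 1 := by
      have := Metric.mem_closedBall.1 hη
      rwa [dist_eq_norm, sub_neg_eq_add] at this
    have hηpos : (0:ℝ) < 1 + ‖η‖ ^ 2 := by positivity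
    have hexp : Real.exp (-C₀) ≤ Real.exp (-a₁ * ‖η + w‖ ^ 2) := by
      apply Real.exp_le_exp.2
      have hsq : ‖η + w‖ ^ 2 ≤ 1 := by nlinarith [norm_nonneg (η + w)]
      nlinarith
    -- comparability
    have htr1 : ‖η‖ ≤ 1 + |a₂| * ‖x‖ := by
      have := norm_sub_le (η + w) w
      simp only [add_sub_cancel_right] at this
      calc ‖η‖ ≤ ‖η + w‖ + ‖w‖ := this
        _ ≤ 1 + |a₂| * ‖x‖ := by rw [hwx] at *; linarith
    have htr2 : |a₂| * ‖x‖ ≤ 1 + ‖η‖ := by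
      have h := norm_sub_le (η + w) η
      simp only [add_sub_cancel_left] at h
      rw [← hwx]
      calc ‖w‖ ≤ ‖η + w‖ + ‖η‖ := h
        _ ≤ 1 + ‖η‖ := by linarith
    have hxle : ‖x‖ ≤ C₀ * (1 + ‖η‖) := by
      have hinv : C₀⁻¹ * ‖x‖ ≤ 1 + ‖η‖ :=
        le_trans (mul_le_mul_of_nonneg_right ha₂l (norm_nonneg x)) htr2
      calc ‖x‖ = C₀ * (C₀⁻¹ * ‖x‖) := by field_simp
        _ ≤ C₀ * (1 + ‖η‖) := mul_le_mul_of_nonneg_left hinv hC₀.le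
    have hηle : ‖η‖ ≤ 1 + C₀ * ‖x‖ := by
      have : |a₂| * ‖x‖ ≤ C₀ * ‖x‖ := mul_le_mul_of_nonneg_right ha₂u (norm_nonneg x)
      linarith
    have hA : 1 + ‖x‖ ^ 2 ≤ K * (1 + ‖η‖ ^ 2) := by
      have h := mul_self_le_mul_self (norm_nonneg x) hxle
      nlinarith [norm_nonneg η, norm_nonneg x, sq_nonneg (1 - ‖η‖), sq_nonneg ‖η‖, hC₀.le,
        sq_nonneg C₀]
    have hB : 1 + ‖η‖ ^ 2 ≤ K * (1 + ‖x‖ ^ 2) := by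
      nlinarith [norm_nonneg η, norm_nonneg x, sq_nonneg (1 - C₀ * ‖x‖), sq_nonneg (C₀ * ‖x‖),
        hC₀.le, sq_nonneg C₀]
    have hrpow : K ^ (-|s| / 2) * (1 + ‖x‖ ^ 2) ^ (s / 2) ≤ (1 + ‖η‖ ^ 2) ^ (s / 2) := by
      rcases le_or_gt 0 s with hs | hs
      · rw [abs_of_nonneg hs, neg_div, Real.rpow_neg hK0.le,
          inv_mul_le_iff₀ (Real.rpow_pos_of_pos hK0 _)]
        calc (1 + ‖x‖ ^ 2) ^ (s / 2) ≤ (K * (1 + ‖η‖ ^ 2)) ^ (s / 2) :=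
              Real.rpow_le_rpow hxpos.le hA (by positivity)
          _ = K ^ (s / 2) * (1 + ‖η‖ ^ 2) ^ (s / 2) := Real.mul_rpow hK0.le hηpos.le
      · rw [abs_of_neg hs]
        have : -(-s) / 2 = s / 2 := by ring
        rw [this, ← Real.mul_rpow hK0.le hxpos.le]
        exact Real.rpow_le_rpow_of_nonpos hηpos hB (by linarith)
    calc Real.exp (-C₀) * (K ^ (-|s| / 2) * (1 + ‖x‖ ^ 2) ^ (s / 2))
        ≤ Real.exp (-a₁ * ‖η + w‖ ^ 2) * (1 + ‖η‖ ^ 2) ^ (s / 2) :=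
          mul_le_mul hexp hrpow (mul_pos hKpow (Real.rpow_pos_of_pos hxpos _)).le (Real.exp_pos _).le
      _ = f η := rfl
  calc Real.exp (-C₀) * K ^ (-|s| / 2) * V * (1 + ‖x‖ ^ 2) ^ (s / 2)
      = Real.exp (-C₀) * (K ^ (-|s| / 2) * (1 + ‖x‖ ^ 2) ^ (s / 2)) * (volume S).toReal := by
        rw [hμS, ← hV]; ring
    _ ≤ ∫ η in S, f η :=
        (by
          have h := setIntegral_ge_of_const_le measurableSet_closedBall
            measure_closedBall_lt_top.ne hpt hfint.integrableOn
          rw [smul_eq_mul, measureReal_def] at h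
          linarith)
    _ ≤ ∫ η, f η := setIntegral_le_integral hfint
        (Filter.Eventually.of_forall fun η => by positivity)
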